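/- Let s₂ be the real 4-dimensional Lie algebra with basis e₁, e₂, e₃, e₄ and nonzero brackets ⁅e₁, e₄⁆ = −e₁, ⁅e₂, e₄⁆ = −e₁ − e₂, ⁅e₃, e₄⁆ = −e₂ − e₃ (all other brackets of basis elements zero, extended bilinearly and antisymmetrically). A linear equivalence T : s₂ ≃ s₂ is a Lie algebra automorphism of s₂ if and only if there exist real numbers a ≠ 0 and b, c, p, q, r ∈ ℝ such that T e₁ = a e₁, T e₂ = b e₁ + a e₂, T e₃ = c e₁ + b e₂ + a e₃, and T e₄ = p e₁ + q e₂ + r e₃ + e₄. -/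

import Mathlib

set_option maxHeartbeats 1000000 in
/-- Characterization of the Lie algebra automorphisms of the real 4-dimensional Lie
algebra `s₂` (Šnobl–Winternitz `s_{4,2}`), with basis `e₁ = b 0, …, e₄ = b 3` and
nonzero brackets `⁅e₁, e₄⁆ = -e₁`, `⁅e₂, e₄⁆ = -e₁ - e₂`, `⁅e₃, e₄⁆ = -e₂ - e₃`. -/
theorem stmt_12 {L : Type*} [LieRing L] [LieAlgebra ℝ L]
    (b : Module.Basis (Fin 4) ℝ L)
    (h12 : ⁅b 0, b 1⁆ = 0) (h13 : ⁅b 0, b 2⁆ = 0) (h14 : ⁅b 0, b 3⁆ = -b 0)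
    (h23 : ⁅b 1, b 2⁆ = 0) (h24 : ⁅b 1, b 3⁆ = -b 0 - b 1) (h34 : ⁅b 2, b 3⁆ = -b 1 - b 2)
    (T : L ≃ₗ[ℝ] L) :
    (∀ x y : L, T ⁅x, y⁆ = ⁅T x, T y⁆) ↔
      ∃ a bb c p q r : ℝ, a ≠ 0 ∧
        T (b 0) = a • b 0 ∧
        T (b 1) = bb • b 0 + a • b 1 ∧
        T (b 2) = c • b 0 + bb • b 1 + a • b 2 ∧
        T (b 3) = p • b 0 + q • b 1 + r • b 2 + b 3 := by
  classical
  have h21 : ⁅b 1, b 0⁆ = (0:L) := by rw [← lie_skew, h12, neg_zero]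
  have h31 : ⁅b 2, b 0⁆ = (0:L) := by rw [← lie_skew, h13, neg_zero]
  have h32 : ⁅b 2, b 1⁆ = (0:L) := by rw [← lie_skew, h23, neg_zero]
  have h41 : ⁅b 3, b 0⁆ = b 0 := by rw [← lie_skew, h14, neg_neg]
  have h42 : ⁅b 3, b 1⁆ = b 0 + b 1 := by rw [← lie_skew, h24]; module
  have h43 : ⁅b 3, b 2⁆ = b 1 + b 2 := by rw [← lie_skew, h34]; module
  have key : ∀ x1 x2 x3 x4 y1 y2 y3 y4 : ℝ,
      ⁅x1 • b 0 + x2 • b 1 + x3 • b 2 + x4 • b 3,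
       y1 • b 0 + y2 • b 1 + y3 • b 2 + y4 • b 3⁆ =
      (y1*x4 + y2*x4 - x1*y4 - x2*y4) • b 0 +
      (y2*x4 + y3*x4 - x2*y4 - x3*y4) • b 1 +
      (y3*x4 - x3*y4) • b 2 + (0:ℝ) • b 3 := by
    intro x1 x2 x3 x4 y1 y2 y3 y4
    simp only [add_lie, lie_add, smul_lie, lie_smul, lie_self,
      h12, h13, h14, h23, h24, h34, h21, h31, h32, h41, h42, h43,
      smul_zero, zero_add, add_zero]
    module
  have coeff : ∀ c1 c2 c3 c4 d1 d2 d3 d4 : ℝ,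
      c1 • b 0 + c2 • b 1 + c3 • b 2 + c4 • b 3 =
      d1 • b 0 + d2 • b 1 + d3 • b 2 + d4 • b 3 →
      c1 = d1 ∧ c2 = d2 ∧ c3 = d3 ∧ c4 = d4 := by
    intro c1 c2 c3 c4 d1 d2 d3 d4 h
    have h' := congrArg b.repr h
    simp only [map_add, map_smul, Module.Basis.repr_self] at h'
    refine ⟨?_, ?_, ?_, ?_⟩
    · simpa [Finsupp.single_apply] using DFunLike.congr_fun h' 0
    · simpa [Finsupp.single_apply] using DFunLike.congr_fun h' 1
    · simpa [Finsupp.single_apply] using DFunLike.congr_fun h' 2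
    · simpa [Finsupp.single_apply] using DFunLike.congr_fun h' 3
  have expand : ∀ z : L, z = (b.repr z 0) • b 0 + (b.repr z 1) • b 1 +
      (b.repr z 2) • b 2 + (b.repr z 3) • b 3 := fun z => by
    have := b.sum_repr z
    rw [Fin.sum_univ_four] at this
    exact this.symm
  have hb0ne : b 0 ≠ (0:L) := b.ne_zero 0
  constructor
  · intro hT
    obtain ⟨u1, u2, u3, u4, e0⟩ : ∃ u1 u2 u3 u4 : ℝ,
        T (b 0) = u1 • b 0 + u2 • b 1 + u3 • b 2 + u4 • b 3 :=
      ⟨_, _, _, _, expand _⟩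
    obtain ⟨v1, v2, v3, v4, e1⟩ : ∃ v1 v2 v3 v4 : ℝ,
        T (b 1) = v1 • b 0 + v2 • b 1 + v3 • b 2 + v4 • b 3 :=
      ⟨_, _, _, _, expand _⟩
    obtain ⟨w1, w2, w3, w4, e2⟩ : ∃ w1 w2 w3 w4 : ℝ,
        T (b 2) = w1 • b 0 + w2 • b 1 + w3 • b 2 + w4 • b 3 :=
      ⟨_, _, _, _, expand _⟩
    obtain ⟨p1, p2, p3, p4, e3⟩ : ∃ p1 p2 p3 p4 : ℝ,
        T (b 3) = p1 • b 0 + p2 • b 1 + p3 • b 2 + p4 • b 3 :=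
      ⟨_, _, _, _, expand _⟩
    have E1 := coeff (p1*u4 + p2*u4 - u1*p4 - u2*p4) (p2*u4 + p3*u4 - u2*p4 - u3*p4)
        (p3*u4 - u3*p4) 0 (-u1) (-u2) (-u3) (-u4) (by
      rw [← key u1 u2 u3 u4 p1 p2 p3 p4, ← e0, ← e3, ← hT (b 0) (b 3), h14, map_neg, e0]
      module)
    have E2 := coeff (p1*v4 + p2*v4 - v1*p4 - v2*p4) (p2*v4 + p3*v4 - v2*p4 - v3*p4)
        (p3*v4 - v3*p4) 0 (-u1 - v1) (-u2 - v2) (-u3 - v3) (-u4 - v4) (by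
      rw [← key v1 v2 v3 v4 p1 p2 p3 p4, ← e1, ← e3, ← hT (b 1) (b 3), h24, map_sub,
        map_neg, e0, e1]
      module)
    have E3 := coeff (p1*w4 + p2*w4 - w1*p4 - w2*p4) (p2*w4 + p3*w4 - w2*p4 - w3*p4)
        (p3*w4 - w3*p4) 0 (-v1 - w1) (-v2 - w2) (-v3 - w3) (-v4 - w4) (by
      rw [← key w1 w2 w3 w4 p1 p2 p3 p4, ← e2, ← e3, ← hT (b 2) (b 3), h34, map_sub,
        map_neg, e1, e2]
      module)
    obtain ⟨E11, E12, E13, E14⟩ := E1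
    obtain ⟨E21, E22, E23, E24⟩ := E2
    obtain ⟨E31, E32, E33, E34⟩ := E3
    have hu4 : u4 = 0 := by linarith
    have hv4 : v4 = 0 := by linarith
    have hw4 : w4 = 0 := by linarith
    subst hu4 hv4 hw4
    have hTb0ne : T (b 0) ≠ 0 := fun h => hb0ne (T.injective (by simpa using h))
    by_cases hp4 : p4 = 1
    · -- the good case
      subst hp4
      have hu2 : u2 = 0 := by linear_combination -E11
      have hu3 : u3 = 0 := by linear_combination -E12
      have hv2 : v2 = u1 := by linear_combination -E21
      have hv3 : v3 = 0 := by linear_combination -E22 + hu2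
      have hw2 : w2 = v1 := by linear_combination -E31
      have hw3 : w3 = u1 := by linear_combination -E32 + hv2
      have ha : u1 ≠ 0 := by
        intro h
        apply hTb0ne
        rw [e0, h, hu2, hu3]
        module
      refine ⟨u1, v1, w1, p1, p2, p3, ha, ?_, ?_, ?_, ?_⟩
      · rw [e0, hu2, hu3]; module
      · rw [e1, hv2, hv3]; module
      · rw [e2, hw2, hw3]; module
      · rw [e3]; module
    · exfalso
      by_cases hp40 : p4 = 0
      · subst hp40
        apply hTb0ne
        have hu1 : u1 = 0 := by linear_combination E11
        have hu2 : u2 = 0 := by linear_combination E12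
        have hu3 : u3 = 0 := by linear_combination E13
        rw [e0, hu1, hu2, hu3]; module
      · -- p4 ≠ 0, p4 ≠ 1 : third coordinates vanish, contradiction with surjectivity
        have hu3 : u3 = 0 := by
          have h : u3 * (1 - p4) = 0 := by linear_combination E13
          rcases mul_eq_zero.1 h with h | h
          · exact h
          · exact absurd (by linarith : p4 = 1) hp4
        have hv3 : v3 = 0 := by
          have h : v3 * (1 - p4) = 0 := by linear_combination E23 - hu3
          rcases mul_eq_zero.1 h with h | h
          · exact h
          · exact absurd (by linarith : p4 = 1) hp4
        have hw3 : w3 = 0 := by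
          have h : w3 * (1 - p4) = 0 := by linear_combination E33 - hv3
          rcases mul_eq_zero.1 h with h | h
          · exact h
          · exact absurd (by linarith : p4 = 1) hp4
        subst hu3 hv3 hw3
        have hTy : T (T.symm (b 2)) = b 2 := T.apply_symm_apply (b 2)
        obtain ⟨y1, y2, y3, y4, ey⟩ : ∃ y1 y2 y3 y4 : ℝ,
            T.symm (b 2) = y1 • b 0 + y2 • b 1 + y3 • b 2 + y4 • b 3 :=
          ⟨_, _, _, _, expand _⟩
        have step : T (y1 • b 0 + y2 • b 1 + y3 • b 2 + y4 • b 3) =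
            (y1*u1 + y2*v1 + y3*w1 + y4*p1) • b 0 +
            (y1*u2 + y2*v2 + y3*w2 + y4*p2) • b 1 +
            (y4*p3) • b 2 + (y4*p4) • b 3 := by
          rw [map_add, map_add, map_add, map_smul, map_smul, map_smul, map_smul,
            e0, e1, e2, e3]
          module
        have hTy' : (y1*u1 + y2*v1 + y3*w1 + y4*p1) • b 0 +
            (y1*u2 + y2*v2 + y3*w2 + y4*p2) • b 1 +
            (y4*p3) • b 2 + (y4*p4) • b 3 =
            (0:ℝ) • b 0 + (0:ℝ) • b 1 + (1:ℝ) • b 2 + (0:ℝ) • b 3 := by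
          rw [← step, ← ey, hTy]
          module
        obtain ⟨c1, c2, c3, c4⟩ := coeff _ _ _ _ _ _ _ _ hTy'
        have hy4 : y4 = 0 := by
          rcases mul_eq_zero.1 c4 with h | h
          · exact h
          · exact absurd h hp40
        rw [hy4] at c3
        simp at c3
  · rintro ⟨a, bb, c, p, q, r, ha, k0, k1, k2, k3⟩
    have k0' : T (b 0) = a • b 0 + (0:ℝ) • b 1 + (0:ℝ) • b 2 + (0:ℝ) • b 3 := by
      rw [k0]; module
    have k1' : T (b 1) = bb • b 0 + a • b 1 + (0:ℝ) • b 2 + (0:ℝ) • b 3 := by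
      rw [k1]; module
    have k2' : T (b 2) = c • b 0 + bb • b 1 + a • b 2 + (0:ℝ) • b 3 := by
      rw [k2]; module
    have k3' : T (b 3) = p • b 0 + q • b 1 + r • b 2 + (1:ℝ) • b 3 := by
      rw [k3]; module
    have hb00 : T ⁅b 0, b 0⁆ = ⁅T (b 0), T (b 0)⁆ := by simp only [lie_self, map_zero]
    have hb11 : T ⁅b 1, b 1⁆ = ⁅T (b 1), T (b 1)⁆ := by simp only [lie_self, map_zero]
    have hb22 : T ⁅b 2, b 2⁆ = ⁅T (b 2), T (b 2)⁆ := by simp only [lie_self, map_zero]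
    have hb33 : T ⁅b 3, b 3⁆ = ⁅T (b 3), T (b 3)⁆ := by simp only [lie_self, map_zero]
    have hb01 : T ⁅b 0, b 1⁆ = ⁅T (b 0), T (b 1)⁆ := by
      simp only [h12, map_zero, k0', k1', key]; module
    have hb02 : T ⁅b 0, b 2⁆ = ⁅T (b 0), T (b 2)⁆ := by
      simp only [h13, map_zero, k0', k2', key]; module
    have hb03 : T ⁅b 0, b 3⁆ = ⁅T (b 0), T (b 3)⁆ := by
      simp only [h14, map_neg, k0', k3', key]; module
    have hb12 : T ⁅b 1, b 2⁆ = ⁅T (b 1), T (b 2)⁆ := by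
      simp only [h23, map_zero, k1', k2', key]; module
    have hb13 : T ⁅b 1, b 3⁆ = ⁅T (b 1), T (b 3)⁆ := by
      simp only [h24, map_sub, map_neg, k0', k1', k3', key]; module
    have hb23 : T ⁅b 2, b 3⁆ = ⁅T (b 2), T (b 3)⁆ := by
      simp only [h34, map_sub, map_neg, k1', k2', k3', key]; module
    have hb10 : T ⁅b 1, b 0⁆ = ⁅T (b 1), T (b 0)⁆ := by
      simp only [h21, map_zero, k0', k1', key]; module
    have hb20 : T ⁅b 2, b 0⁆ = ⁅T (b 2), T (b 0)⁆ := by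
      simp only [h31, map_zero, k0', k2', key]; module
    have hb21 : T ⁅b 2, b 1⁆ = ⁅T (b 2), T (b 1)⁆ := by
      simp only [h32, map_zero, k1', k2', key]; module
    have hb30 : T ⁅b 3, b 0⁆ = ⁅T (b 3), T (b 0)⁆ := by
      simp only [h41, k0', k3', key]; module
    have hb31 : T ⁅b 3, b 1⁆ = ⁅T (b 3), T (b 1)⁆ := by
      simp only [h42, map_add, k0', k1', k3', key]; module
    have hb32 : T ⁅b 3, b 2⁆ = ⁅T (b 3), T (b 2)⁆ := by
      simp only [h43, map_add, k1', k2', k3', key]; module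
    have hbij : ∀ i j : Fin 4, T ⁅b i, b j⁆ = ⁅T (b i), T (b j)⁆ := by
      intro i j
      fin_cases i <;> fin_cases j <;>
        first
          | exact hb00 | exact hb01 | exact hb02 | exact hb03
          | exact hb10 | exact hb11 | exact hb12 | exact hb13
          | exact hb20 | exact hb21 | exact hb22 | exact hb23
          | exact hb30 | exact hb31 | exact hb32 | exact hb33
    intro x y
    rw [← b.sum_repr x, ← b.sum_repr y, Fin.sum_univ_four, Fin.sum_univ_four]
    simp only [lie_add, add_lie, lie_smul, smul_lie, map_add, map_smul, hbij]
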